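/- Let g : ℝⁿ → ℝ be convex differentiable with L-Lipschitz gradient, D : ℝⁿ → ℝⁿ nonexpansive, τ > 0, and define G = ∇g + τ(I - D). Then I - (2/(L+2τ))G is nonexpansive, and consequently G is 1/(L+2τ)-cocoercive. -/

import Mathlib

open RealInnerProductSpace Set Filter Topology

section aux
variable {F : Type*} [NormedAddCommGroup F] [InnerProductSpace ℝ F] [CompleteSpace F]

lemma line_hasDerivAt (g : F → ℝ) (g' : F → F) (hgrad : ∀ x, HasGradientAt g (g' x) x)
    (x v : F) (t : ℝ) :
    HasDerivAt (fun s : ℝ => g (x + s • v)) ⟪g' (x + t • v), v⟫ t := by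
  have hc : HasDerivAt (fun s : ℝ => x + s • v) v t := by
    simpa using ((hasDerivAt_id t).smul_const v).const_add x
  have := (hgrad (x + t • v)).hasFDerivAt.comp_hasDerivAt t hc
  simpa [InnerProductSpace.toDual_apply_apply, Function.comp_def] using this

/-- subgradient inequality -/
lemma subgrad (g : F → ℝ) (g' : F → F) (hconv : ConvexOn ℝ Set.univ g)
    (hgrad : ∀ x, HasGradientAt g (g' x) x) (x y : F) :
    g x + ⟪g' x, y - x⟫ ≤ g y := by
  set v := y - x with hv
  have hder : HasDerivAt (fun s : ℝ => g (x + s • v)) ⟪g' x, v⟫ 0 := by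
    simpa using line_hasDerivAt g g' hgrad x v 0
  have hslope : Tendsto (slope (fun s : ℝ => g (x + s • v)) 0) (𝓝[>] 0) (𝓝 ⟪g' x, v⟫) :=
    (hasDerivAt_iff_tendsto_slope.mp hder).mono_left
      (nhdsWithin_mono _ (fun t ht => ne_of_gt ht))
  have hbound : ∀ᶠ t in 𝓝[>] (0:ℝ), slope (fun s : ℝ => g (x + s • v)) 0 t ≤ g y - g x := by
    filter_upwards [Ioo_mem_nhdsGT_of_mem (by norm_num : (0:ℝ) ∈ Ico 0 1)] with t ht
    have hcomb := hconv.2 (mem_univ x) (mem_univ y) (by linarith [ht.1, ht.2] : (0:ℝ) ≤ 1 - t)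
      (le_of_lt ht.1) (by ring)
    have hpt : (1 - t) • x + t • y = x + t • v := by rw [hv]; module
    rw [hpt] at hcomb
    have h1 : g (x + t • v) ≤ (1 - t) * g x + t * g y := by
      simpa [smul_eq_mul] using hcomb
    rw [slope_def_field]
    simp only [zero_smul, add_zero, sub_zero]
    rw [div_le_iff₀ ht.1]
    nlinarith [ht.1]
  have := le_of_tendsto hslope hbound
  have h0 : g (x + (0:ℝ) • v) = g x := by simp
  linarith [this]

/-- descent lemma -/
lemma descent (g : F → ℝ) (g' : F → F) (L : ℝ) (hL : 0 < L)
    (hgrad : ∀ x, HasGradientAt g (g' x) x)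
    (hlip : ∀ x y, ‖g' x - g' y‖ ≤ L * ‖x - y‖) (x y : F) :
    g y ≤ g x + ⟪g' x, y - x⟫ + L / 2 * ‖y - x‖ ^ 2 := by
  set v := y - x with hv
  set ψ : ℝ → ℝ := fun t => g (x + t • v) - t * ⟪g' x, v⟫ - L * t ^ 2 / 2 * ‖v‖ ^ 2 with hψ
  have hder : ∀ t : ℝ, HasDerivAt ψ
      (⟪g' (x + t • v), v⟫ - ⟪g' x, v⟫ - L * t * ‖v‖ ^ 2) t := by
    intro t
    have h1 := line_hasDerivAt g g' hgrad x v t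
    have h2 : HasDerivAt (fun s : ℝ => s * ⟪g' x, v⟫) ⟪g' x, v⟫ t := by
      simpa using (hasDerivAt_id t).mul_const ⟪g' x, v⟫
    have h3 : HasDerivAt (fun s : ℝ => L * s ^ 2 / 2 * ‖v‖ ^ 2) (L * t * ‖v‖ ^ 2) t := by
      have : HasDerivAt (fun s : ℝ => s ^ 2) (2 * t) t := by
        simpa using hasDerivAt_pow 2 t
      have := ((this.const_mul L).div_const 2).mul_const (‖v‖ ^ 2)
      rw [show L * t * ‖v‖ ^ 2 = L * (2 * t) / 2 * ‖v‖ ^ 2 by ring]; exact this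
    simpa [hψ, Pi.sub_def] using (h1.sub h2).sub h3
  have hanti : AntitoneOn ψ (Icc 0 1) := by
    apply antitoneOn_of_deriv_nonpos (convex_Icc 0 1)
    · exact (Differentiable.continuous (fun t => (hder t).differentiableAt)).continuousOn
    · intro t ht
      exact ((hder t).differentiableAt).differentiableWithinAt
    · intro t ht
      rw [interior_Icc] at ht
      rw [(hder t).deriv]
      have hip : ⟪g' (x + t • v) - g' x, v⟫ ≤ ‖g' (x + t • v) - g' x‖ * ‖v‖ :=
        real_inner_le_norm _ _
      have hl : ‖g' (x + t • v) - g' x‖ ≤ L * (t * ‖v‖) := by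
        have := hlip (x + t • v) x
        simpa [norm_smul, abs_of_pos ht.1, mul_assoc] using this
      have hvn : (0:ℝ) ≤ ‖v‖ := norm_nonneg _
      have : ⟪g' (x + t • v), v⟫ - ⟪g' x, v⟫ ≤ L * t * ‖v‖ ^ 2 := by
        rw [← inner_sub_left]
        nlinarith
      linarith
  have := hanti (by norm_num : (0:ℝ) ∈ Icc (0:ℝ) 1) (by norm_num : (1:ℝ) ∈ Icc (0:ℝ) 1)
    zero_le_one
  simp only [hψ, zero_smul, add_zero, one_smul, one_pow, zero_pow, mul_zero, zero_mul,
    sub_zero, mul_one] at this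
  have hxy : x + v = y := by rw [hv]; abel
  rw [hxy] at this
  linarith

/-- strengthened lower bound -/
lemma strong_lower (g : F → ℝ) (g' : F → F) (L : ℝ) (hL : 0 < L)
    (hconv : ConvexOn ℝ Set.univ g)
    (hgrad : ∀ x, HasGradientAt g (g' x) x)
    (hlip : ∀ x y, ‖g' x - g' y‖ ≤ L * ‖x - y‖) (x y : F) :
    g x + ⟪g' x, y - x⟫ + 1 / (2 * L) * ‖g' y - g' x‖ ^ 2 ≤ g y := by
  set u := g' y - g' x with hu
  set z := y - (1 / L) • u with hz
  have h1 := descent g g' L hL hgrad hlip y z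
  have h2 := subgrad g g' hconv hgrad x z
  have hzy : z - y = -((1/L) • u) := by rw [hz]; abel
  have hzx : z - x = (y - x) - (1/L) • u := by rw [hz]; abel
  rw [hzy] at h1
  rw [hzx] at h2
  have e1 : ⟪g' y, -((1/L) • u)⟫ = -(1/L) * ⟪g' y, u⟫ := by
    rw [inner_neg_right, real_inner_smul_right]; ring
  have e2 : ‖-((1/L) • u)‖ ^ 2 = (1/L)^2 * ‖u‖^2 := by
    rw [norm_neg, norm_smul, mul_pow, Real.norm_eq_abs, sq_abs]
  have e3 : ⟪g' x, (y - x) - (1/L) • u⟫ = ⟪g' x, y - x⟫ - (1/L) * ⟪g' x, u⟫ := by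
    rw [inner_sub_right, real_inner_smul_right]
  have e4 : ⟪g' y, u⟫ - ⟪g' x, u⟫ = ‖u‖ ^ 2 := by
    rw [← inner_sub_left, ← hu, real_inner_self_eq_norm_sq]
  rw [e1, e2] at h1
  rw [e3] at h2
  have hLL : L / 2 * ((1/L)^2 * ‖u‖^2) = 1/(2*L) * ‖u‖^2 := by
    field_simp
  rw [hLL] at h1
  have e5 : (1/L) * ⟪g' y, u⟫ - (1/L) * ⟪g' x, u⟫ = (1/L) * ‖u‖^2 := by
    linear_combination (1/L) * e4
  have e6 : (1/L) * ‖u‖^2 - 1/(2*L) * ‖u‖^2 = 1/(2*L) * ‖u‖^2 := by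
    field_simp; ring
  linarith [h1, h2, e5, e6]

/-- cocoercivity of the gradient (Baillon–Haddad) -/
lemma coco (g : F → ℝ) (g' : F → F) (L : ℝ) (hL : 0 < L)
    (hconv : ConvexOn ℝ Set.univ g)
    (hgrad : ∀ x, HasGradientAt g (g' x) x)
    (hlip : ∀ x y, ‖g' x - g' y‖ ≤ L * ‖x - y‖) (x y : F) :
    (1 / L) * ‖g' x - g' y‖ ^ 2 ≤ ⟪g' x - g' y, x - y⟫ := by
  have h1 := strong_lower g g' L hL hconv hgrad hlip x y
  have h2 := strong_lower g g' L hL hconv hgrad hlip y x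
  have e1 : ‖g' x - g' y‖ = ‖g' y - g' x‖ := norm_sub_rev _ _
  have e2 : ⟪g' x, y - x⟫ + ⟪g' y, x - y⟫ = -⟪g' x - g' y, x - y⟫ := by
    rw [inner_sub_left]
    have : ⟪g' x, y - x⟫ = -⟪g' x, x - y⟫ := by
      rw [← inner_neg_right]; congr 1; abel
    rw [this]; ring
  rw [e1] at h2 ⊢
  have hq : 1/(2*L) * ‖g' y - g' x‖^2 + 1/(2*L) * ‖g' y - g' x‖^2 = (1/L) * ‖g' y - g' x‖^2 := by
    field_simp; ring
  linarith [h1, h2, hq, e2.ge, e2.le]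

end aux

theorem msred_operator_cocoercive {n : ℕ} (g : EuclideanSpace ℝ (Fin n) → ℝ)
    (g' D : EuclideanSpace ℝ (Fin n) → EuclideanSpace ℝ (Fin n)) (L τ : ℝ)
    (hL : 0 < L) (hτ : 0 < τ)
    (hconv : ConvexOn ℝ Set.univ g)
    (hgrad : ∀ x, HasGradientAt g (g' x) x)
    (hlip : ∀ x y, ‖g' x - g' y‖ ≤ L * ‖x - y‖)
    (hD : ∀ x y, ‖D x - D y‖ ≤ ‖x - y‖)
    (G : EuclideanSpace ℝ (Fin n) → EuclideanSpace ℝ (Fin n))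
    (hG : ∀ x, G x = g' x + τ • (x - D x)) :
    (∀ x y : EuclideanSpace ℝ (Fin n),
      ‖(x - (2 / (L + 2 * τ)) • G x) - (y - (2 / (L + 2 * τ)) • G y)‖ ≤ ‖x - y‖) ∧
    (∀ x y : EuclideanSpace ℝ (Fin n),
      (1 / (L + 2 * τ)) * ‖G x - G y‖ ^ 2 ≤ ⟪G x - G y, x - y⟫) := by
  have hLτ : (0:ℝ) < L + 2 * τ := by linarith
  have hL0 : L ≠ 0 := ne_of_gt hL
  have hc0 : L + 2 * τ ≠ 0 := ne_of_gt hLτ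
  have part1 : ∀ x y : EuclideanSpace ℝ (Fin n),
      ‖(x - (2 / (L + 2 * τ)) • G x) - (y - (2 / (L + 2 * τ)) • G y)‖ ≤ ‖x - y‖ := by
    intro x y
    have key : (x - (2 / (L + 2 * τ)) • G x) - (y - (2 / (L + 2 * τ)) • G y)
        = (L / (L + 2 * τ)) • ((x - y) - (2 / L) • (g' x - g' y))
          + (2 * τ / (L + 2 * τ)) • (D x - D y) := by
      rw [hG x, hG y]
      match_scalars <;> field_simp <;> ring
    have hva : ‖(x - y) - (2 / L) • (g' x - g' y)‖ ≤ ‖x - y‖ := by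
      have hsq : ‖(x - y) - (2 / L) • (g' x - g' y)‖ ^ 2 ≤ ‖x - y‖ ^ 2 := by
        rw [norm_sub_sq_real]
        have e1 : ⟪x - y, (2 / L) • (g' x - g' y)⟫ = (2 / L) * ⟪g' x - g' y, x - y⟫ := by
          rw [real_inner_smul_right, real_inner_comm]
        have e2 : ‖(2 / L) • (g' x - g' y)‖ ^ 2 = (2 / L) ^ 2 * ‖g' x - g' y‖ ^ 2 := by
          rw [norm_smul, mul_pow, Real.norm_eq_abs, sq_abs]
        rw [e1, e2]
        have hmul := mul_le_mul_of_nonneg_left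
          (coco g g' L hL hconv hgrad hlip x y) (by positivity : (0:ℝ) ≤ 4 / L)
        ring_nf at hmul ⊢
        linarith [hmul]
      have := Real.sqrt_le_sqrt hsq
      rwa [Real.sqrt_sq (norm_nonneg _), Real.sqrt_sq (norm_nonneg _)] at this
    have hθ0 : (0:ℝ) ≤ L / (L + 2 * τ) := by positivity
    have hθ1 : (0:ℝ) ≤ 2 * τ / (L + 2 * τ) := by positivity
    calc ‖(x - (2 / (L + 2 * τ)) • G x) - (y - (2 / (L + 2 * τ)) • G y)‖
        = ‖(L / (L + 2 * τ)) • ((x - y) - (2 / L) • (g' x - g' y))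
            + (2 * τ / (L + 2 * τ)) • (D x - D y)‖ := by rw [key]
      _ ≤ (L / (L + 2 * τ)) * ‖(x - y) - (2 / L) • (g' x - g' y)‖
            + (2 * τ / (L + 2 * τ)) * ‖D x - D y‖ := by
          refine (norm_add_le _ _).trans ?_
          rw [norm_smul, norm_smul, Real.norm_eq_abs, Real.norm_eq_abs,
            abs_of_nonneg hθ0, abs_of_nonneg hθ1]
      _ ≤ (L / (L + 2 * τ)) * ‖x - y‖ + (2 * τ / (L + 2 * τ)) * ‖x - y‖ := by
          gcongr
          exact hD x y
      _ = ‖x - y‖ := by field_simp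
  refine ⟨part1, fun x y => ?_⟩
  have h1 := part1 x y
  have heq : (x - (2 / (L + 2 * τ)) • G x) - (y - (2 / (L + 2 * τ)) • G y)
      = (x - y) - (2 / (L + 2 * τ)) • (G x - G y) := by module
  rw [heq] at h1
  have hsq : ‖(x - y) - (2 / (L + 2 * τ)) • (G x - G y)‖ ^ 2 ≤ ‖x - y‖ ^ 2 :=
    pow_le_pow_left₀ (norm_nonneg _) h1 2
  rw [norm_sub_sq_real] at hsq
  have e2 : ‖(2 / (L + 2 * τ)) • (G x - G y)‖ ^ 2
      = (2 / (L + 2 * τ)) ^ 2 * ‖G x - G y‖ ^ 2 := by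
    rw [norm_smul, mul_pow, Real.norm_eq_abs, sq_abs]
  have e3 : ⟪x - y, (2 / (L + 2 * τ)) • (G x - G y)⟫
      = (2 / (L + 2 * τ)) * ⟪G x - G y, x - y⟫ := by
    rw [real_inner_smul_right, real_inner_comm]
  rw [e2, e3] at hsq
  have key2 : (2 / (L + 2 * τ)) ^ 2 * ‖G x - G y‖ ^ 2
      ≤ 2 * ((2 / (L + 2 * τ)) * ⟪G x - G y, x - y⟫) := by linarith
  have hmul := mul_le_mul_of_nonneg_left key2 (by positivity : (0:ℝ) ≤ (L + 2 * τ) / 4)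
  calc (1 / (L + 2 * τ)) * ‖G x - G y‖ ^ 2
      = (L + 2 * τ) / 4 * ((2 / (L + 2 * τ)) ^ 2 * ‖G x - G y‖ ^ 2) := by
        field_simp; ring
    _ ≤ (L + 2 * τ) / 4 * (2 * ((2 / (L + 2 * τ)) * ⟪G x - G y, x - y⟫)) := hmul
    _ = ⟪G x - G y, x - y⟫ := by field_simp; ring
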